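/- Let u : H → ℝ be continuous, both k-semi-concave and k-semi-convex for some k > 0. Then u is Fréchet differentiable on H, its gradient map x ↦ ∇u(x) is Lipschitz with constant 6/k, and for each x there is a unique l_x ∈ H with |u(x+y) - u(x) - ⟪l_x, y⟫| ≤ ‖y‖²/k for all y. -/

import Mathlib

open scoped RealInnerProductSpace




theorem my_exists_subgradient {H : Type*} [NormedAddCommGroup H] [InnerProductSpace ℝ H]
    [CompleteSpace H] (f : H → ℝ) (hf : Continuous f)
    (hc : ConvexOn ℝ Set.univ f) (x : H) :
    ∃ n : H, ∀ y : H, f x + ⟪n, y - x⟫ ≤ f y := by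
  set S : Set (H × ℝ) := {p | f p.1 < p.2} with hS
  have hopen : IsOpen S := isOpen_lt (hf.comp continuous_fst) continuous_snd
  have hconvS : Convex ℝ S := by
    rintro ⟨p1, p2⟩ hp ⟨q1, q2⟩ hq a b ha hb hab
    simp only [hS, Set.mem_setOf_eq] at hp hq
    have h1 : f (a • p1 + b • q1) ≤ a * f p1 + b * f q1 :=
      hc.2 (Set.mem_univ p1) (Set.mem_univ q1) ha hb hab
    show f (a • p1 + b • q1) < a * p2 + b * q2
    rcases eq_or_lt_of_le ha with h | h
    · have hb1 : b = 1 := by linarith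
      have := h1
      rw [← h, hb1] at this ⊢
      simpa using lt_of_le_of_lt (by simpa using this) (by linarith : f q1 < 0 * p2 + 1 * q2)
    · have h2 : a * f p1 < a * p2 := mul_lt_mul_of_pos_left hp h
      have h3 : b * f q1 ≤ b * q2 := mul_le_mul_of_nonneg_left hq.le hb
      linarith
  have hx : (x, f x) ∉ S := by simp [hS]
  obtain ⟨φ, hφ⟩ := geometric_hahn_banach_open_point hconvS hopen hx
  set a : ℝ := φ (0, 1) with ha
  have hdecomp : ∀ (y : H) (t : ℝ), φ (y, t) = φ (y, 0) + t * a := by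
    intro y t
    have : (y, t) = (y, (0:ℝ)) + t • ((0:H), (1:ℝ)) := by
      simp [Prod.ext_iff]
    rw [this, map_add, map_smul]
    simp [ha]
  have haneg : a < 0 := by
    have h1 := hφ (x, f x + 1) (by simp [hS])
    have e1 := hdecomp x (f x + 1)
    have e2 := hdecomp x (f x)
    nlinarith [h1, e1, e2]
  have key : ∀ y : H, φ (y, 0) + f y * a ≤ φ (x, 0) + f x * a := by
    intro y
    refine le_of_forall_pos_lt_add fun ε hε => ?_
    have hεa : 0 < ε / (-a) := div_pos hε (by linarith)
    have h1 := hφ (y, f y + ε / (-a)) (by simp only [hS, Set.mem_setOf_eq]; linarith)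
    have e1 := hdecomp y (f y + ε / (-a))
    have e2 := hdecomp x (f x)
    have hne : a ≠ 0 := ne_of_lt haneg
    have e0 : ε / (-a) * a = -ε := by
      rw [div_mul_eq_mul_div, div_neg, mul_div_cancel_right₀ _ hne]
    have e3 : (f y + ε / (-a)) * a = f y * a - ε := by
      rw [add_mul, e0]; ring
    nlinarith [h1, e1, e2, e3]
  set ψ : H →L[ℝ] ℝ := (-a)⁻¹ • (φ.comp (ContinuousLinearMap.inl ℝ H ℝ)) with hψ
  refine ⟨(InnerProductSpace.toDual ℝ H).symm ψ, fun y => ?_⟩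
  rw [InnerProductSpace.toDual_symm_apply]
  have hψval : ∀ z : H, ψ z = (-a)⁻¹ * φ (z, 0) := fun z => rfl
  rw [map_sub, hψval, hψval]
  have hk := key y
  have hapos : 0 < -a := by linarith
  have h2 : φ (y, 0) - φ (x, 0) ≤ (f y - f x) * (-a) := by nlinarith [hk]
  have h3 := mul_le_mul_of_nonneg_left h2 (inv_nonneg.2 hapos.le)
  have hne : a ≠ 0 := ne_of_lt haneg
  have h4 : (-a)⁻¹ * ((f y - f x) * (-a)) = f y - f x := by
    field_simp
  nlinarith [h3, h4]




theorem my_inner_quad_zero {H : Type*} [NormedAddCommGroup H] [InnerProductSpace ℝ H]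
    {k : ℝ} (hk : 0 < k) {w : H} (h : ∀ y : H, ⟪w, y⟫ ≤ 2 * ‖y‖ ^ 2 / k) : w = 0 := by
  by_contra hw
  have hc : 0 < ‖w‖ := norm_pos_iff.2 hw
  have h1 := h ((k / 4) • w)
  rw [real_inner_smul_right, real_inner_self_eq_norm_sq, norm_smul] at h1
  have habs : ‖(k / 4 : ℝ)‖ = k / 4 := by
    rw [Real.norm_eq_abs, abs_of_pos (by linarith)]
  rw [habs] at h1
  have hne : k ≠ 0 := ne_of_gt hk
  have e : 2 * (k / 4 * ‖w‖) ^ 2 / k = k * ‖w‖ ^ 2 / 8 := by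
    field_simp; ring
  rw [e] at h1
  nlinarith [mul_pos hk (mul_pos hc hc)]

theorem my_key {H : Type*} [NormedAddCommGroup H] [InnerProductSpace ℝ H] [CompleteSpace H]
    (u : H → ℝ) (hu_cont : Continuous u) (k : ℝ) (hk : 0 < k)
    (hconc : ConcaveOn ℝ Set.univ (fun x : H => u x - ‖x‖ ^ 2 / k))
    (hconv : ConvexOn ℝ Set.univ (fun x : H => u x + ‖x‖ ^ 2 / k)) (x : H) :
    ∃ l : H, ∀ y : H, |u (x + y) - u x - ⟪l, y⟫| ≤ ‖y‖ ^ 2 / k := by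
  have hFc : Continuous fun z : H => u z + ‖z‖ ^ 2 / k :=
    hu_cont.add ((continuous_norm.pow 2).div_const k)
  have hGc : Continuous fun z : H => -(u z - ‖z‖ ^ 2 / k) :=
    (hu_cont.sub ((continuous_norm.pow 2).div_const k)).neg
  obtain ⟨n, hn⟩ := my_exists_subgradient _ hFc hconv x
  obtain ⟨m, hm⟩ := my_exists_subgradient _ hGc hconc.neg x
  have hsq : ∀ y : H, ‖x + y‖ ^ 2 / k = ‖x‖ ^ 2 / k + 2 * ⟪x, y⟫ / k + ‖y‖ ^ 2 / k := by
    intro y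
    rw [norm_add_sq_real]; ring
  set l : H := n - (2 / k) • x with hldef
  set l' : H := -m + (2 / k) • x with hl'def
  have hlin : ∀ y : H, ⟪l, y⟫ = ⟪n, y⟫ - 2 * ⟪x, y⟫ / k := by
    intro y
    rw [hldef, inner_sub_left, real_inner_smul_left]; ring
  have hlin' : ∀ y : H, ⟪l', y⟫ = -⟪m, y⟫ + 2 * ⟪x, y⟫ / k := by
    intro y
    rw [hl'def, inner_add_left, inner_neg_left, real_inner_smul_left]; ring
  have hlow : ∀ y : H, -(‖y‖ ^ 2 / k) ≤ u (x + y) - u x - ⟪l, y⟫ := by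
    intro y
    have h1 := hn (x + y)
    rw [add_sub_cancel_left] at h1
    rw [hlin y]
    have h2 := hsq y
    linarith
  have hup : ∀ y : H, u (x + y) - u x - ⟪l', y⟫ ≤ ‖y‖ ^ 2 / k := by
    intro y
    have h1 := hm (x + y)
    rw [add_sub_cancel_left] at h1
    rw [hlin' y]
    have h2 := hsq y
    linarith
  have hll' : l = l' := by
    rw [← sub_eq_zero]
    apply my_inner_quad_zero hk
    intro y
    have h1 := hlow y
    have h2 := hup y
    rw [inner_sub_left]
    have : 2 * ‖y‖ ^ 2 / k = ‖y‖ ^ 2 / k + ‖y‖ ^ 2 / k := by ring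
    rw [this]
    linarith
  refine ⟨l, fun y => abs_le.2 ⟨by linarith [hlow y], ?_⟩⟩
  rw [hll']
  linarith [hup y]

theorem semiconcave_semiconvex_C11 {H : Type*} [NormedAddCommGroup H]
    [InnerProductSpace ℝ H] [CompleteSpace H]
    (u : H → ℝ) (hu_cont : Continuous u) (k : ℝ) (hk : 0 < k)
    (hconc : ConcaveOn ℝ Set.univ (fun x : H => u x - ‖x‖ ^ 2 / k))
    (hconv : ConvexOn ℝ Set.univ (fun x : H => u x + ‖x‖ ^ 2 / k)) :
    Differentiable ℝ u ∧
      LipschitzWith (Real.toNNReal (6 / k)) (fun x => gradient u x) ∧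
      (∀ x : H, ∃! l : H, ∀ y : H, |u (x + y) - u x - ⟪l, y⟫| ≤ ‖y‖ ^ 2 / k) := by
  choose l hl using my_key u hu_cont k hk hconc hconv
  have uniq : ∀ (x l' : H), (∀ y : H, |u (x + y) - u x - ⟪l', y⟫| ≤ ‖y‖ ^ 2 / k) → l' = l x := by
    intro x l' h'
    rw [← sub_eq_zero]
    apply my_inner_quad_zero hk
    intro y
    have h1 := abs_le.1 (h' y)
    have h2 := abs_le.1 (hl x y)
    rw [inner_sub_left]
    have : 2 * ‖y‖ ^ 2 / k = ‖y‖ ^ 2 / k + ‖y‖ ^ 2 / k := by ring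
    rw [this]
    linarith [h1.2, h2.1]
  have hgrad : ∀ x, HasGradientAt u (l x) x := by
    intro x
    have hfd : HasFDerivAt u (InnerProductSpace.toDual ℝ H (l x)) x := by
      rw [hasFDerivAt_iff_isLittleO_nhds_zero]
      rw [Asymptotics.isLittleO_iff]
      intro c hc
      filter_upwards [Metric.ball_mem_nhds (0 : H) (mul_pos hc hk)] with h hh
      rw [mem_ball_zero_iff] at hh
      have hb := hl x h
      rw [InnerProductSpace.toDual_apply_apply]
      rw [Real.norm_eq_abs]
      have hn : ‖h‖ ^ 2 / k ≤ c * ‖h‖ := by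
        rw [div_le_iff₀ hk]
        nlinarith [norm_nonneg h]
      calc |u (x + h) - u x - ⟪l x, h⟫| ≤ ‖h‖ ^ 2 / k := hb
        _ ≤ c * ‖h‖ := hn
    have := hfd.hasGradientAt
    rwa [LinearIsometryEquiv.symm_apply_apply] at this
  have hgradeq : ∀ x, gradient u x = l x := fun x => (hgrad x).gradient
  refine ⟨fun x => (hgrad x).hasFDerivAt.differentiableAt, ?_,
    fun x => ⟨l x, hl x, fun l' h' => uniq x l' h'⟩⟩
  apply LipschitzWith.of_dist_le_mul
  intro a b
  rw [dist_eq_norm, dist_eq_norm]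
  simp only [hgradeq]
  have hck : ((6 / k : ℝ).toNNReal : ℝ) = 6 / k := Real.coe_toNNReal _ (by positivity)
  rw [hck]
  set v : H := b - a with hv
  set Δ : H := l a - l b with hΔ
  have claim : ∀ y : H, ⟪Δ, y⟫ ≤ ‖v + y‖ ^ 2 / k + ‖v‖ ^ 2 / k + ‖y‖ ^ 2 / k := by
    intro y
    have e1 : a + (v + y) = b + y := by rw [hv]; abel
    have h1 := abs_le.1 (hl a (v + y))
    rw [e1] at h1
    have e2 : a + v = b := by rw [hv]; abel
    have h2 := abs_le.1 (hl a v)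
    rw [e2] at h2
    have h3 := abs_le.1 (hl b y)
    have hia : ⟪l a, v + y⟫ = ⟪l a, v⟫ + ⟪l a, y⟫ := inner_add_right _ _ _
    rw [hΔ, inner_sub_left]
    linarith [h1.2, h2.1, h3.1, hia]
  rcases eq_or_ne Δ 0 with h0 | h0
  · rw [h0, norm_zero]
    positivity
  rcases eq_or_ne v 0 with hv0 | hv0
  · exfalso
    have hab : b = a := sub_eq_zero.1 hv0
    exact h0 (by rw [hΔ, hab, sub_self])
  · have hΔpos : 0 < ‖Δ‖ := norm_pos_iff.2 h0
    have hd : 0 < ‖v‖ := norm_pos_iff.2 hv0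
    set d : ℝ := ‖v‖ with hdd
    set y : H := (d / ‖Δ‖) • Δ with hy
    have hny : ‖y‖ = d := by
      rw [hy, norm_smul, Real.norm_eq_abs, abs_of_pos (div_pos hd hΔpos),
        div_mul_cancel₀ _ (ne_of_gt hΔpos)]
    have hinner : ⟪Δ, y⟫ = d * ‖Δ‖ := by
      rw [hy, real_inner_smul_right, real_inner_self_eq_norm_sq]
      field_simp
    have hvy : ‖v + y‖ ^ 2 ≤ 4 * d ^ 2 := by
      have := norm_add_le v y
      rw [hny] at this
      nlinarith [norm_nonneg (v + y)]
    have hc := claim y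
    rw [hinner, hny] at hc
    have hvy' : ‖v + y‖ ^ 2 / k ≤ 4 * d ^ 2 / k := by
      exact div_le_div_of_nonneg_right hvy hk.le
    have hfin : d * ‖Δ‖ ≤ 6 * d ^ 2 / k := by
      have : 4 * d ^ 2 / k + d ^ 2 / k + d ^ 2 / k = 6 * d ^ 2 / k := by ring
      linarith
    have hgoal : ‖Δ‖ ≤ 6 / k * d := by
      have e : 6 * d ^ 2 / k = 6 / k * d * d := by
        field_simp
      rw [e] at hfin
      exact le_of_mul_le_mul_right (by linarith [hfin]) hd
    have : ‖l a - l b‖ = ‖Δ‖ := rfl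
    rw [this]
    have : ‖a - b‖ = d := by rw [hdd, hv, norm_sub_rev]
    rw [this]
    exact hgoal
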